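/- Let F be a field of characteristic 2. There exist σ, τ ∈ 𝒩(F) with σ ∘ σ = τ ∘ τ = t, σ ∘ τ = τ ∘ σ, σ ≠ t, τ ≠ t, σ ≠ τ, and d(σ) = d(τ) = d(σ ∘ τ) = 1 (i.e., the Klein four-group Z/2 × Z/2 embeds into 𝒩(F) with all three nontrivial elements of depth 1) if and only if F ≠ F₂, i.e., if and only if F has more than two elements. -/

import Mathlib

open PowerSeries

/-- Composition of power series `σ ∘ τ` (substitution of `τ` into `σ`), valid when
`τ` has zero constant coefficient. -/
noncomputable def ngComp {F : Type*} [CommRing F] (σ τ : PowerSeries F) : PowerSeries F :=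
  PowerSeries.mk fun k =>
    ∑ n ∈ Finset.range (k + 1), PowerSeries.coeff n σ * PowerSeries.coeff k (τ ^ n)

/-- Membership in the Nottingham group: `σ ≡ t (mod t²)`. -/
def IsNott {F : Type*} [CommRing F] (σ : PowerSeries F) : Prop :=
  PowerSeries.coeff 0 σ = 0 ∧ PowerSeries.coeff 1 σ = 1

/-- `σ` has depth `m`, i.e. `ord_t (σ - t) = m + 1`. -/
def HasDepth {F : Type*} [CommRing F] (σ : PowerSeries F) (m : ℕ) : Prop :=
  (∀ i < m + 1, PowerSeries.coeff i (σ - PowerSeries.X) = 0) ∧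
    PowerSeries.coeff (m + 1) (σ - PowerSeries.X) ≠ 0

section Aux

open Finset

variable {F : Type*} [CommRing F]

/-- The involution `t/(1 - a t) = t + a t² + a² t³ + ⋯`. -/
noncomputable def sig (a : F) : PowerSeries F :=
  PowerSeries.mk fun n => if n = 0 then 0 else a ^ (n - 1)

@[simp] lemma coeff_sig (a : F) (n : ℕ) :
    coeff n (sig a) = if n = 0 then 0 else a ^ (n - 1) := coeff_mk n _

lemma coeff_sig_pow (b : F) (n : ℕ) : ∀ k, coeff k (sig b ^ (n + 1)) =
    if n + 1 ≤ k then ((k - 1).choose n : F) * b ^ (k - 1 - n) else 0 := by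
  induction n with
  | zero =>
    intro k
    rw [pow_one, coeff_sig]
    rcases Nat.eq_zero_or_pos k with rfl | hk
    · simp
    · rw [if_neg (by omega), if_pos (by omega : 0 + 1 ≤ k), Nat.choose_zero_right,
        Nat.sub_zero]
      push_cast; ring
  | succ n ih =>
    intro k
    rw [pow_succ', coeff_mul, Finset.Nat.sum_antidiagonal_eq_sum_range_succ_mk]
    have hterm : ∀ i ∈ range (k + 1), coeff i (sig b) * coeff (k - i) (sig b ^ (n + 1)) =
        if i ∈ Icc 1 (k - n - 1) then ((k - i - 1).choose n : F) * b ^ (k - 2 - n) else 0 := by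
      intro i hi
      simp only [mem_range] at hi
      rw [coeff_sig, ih]
      simp only [mem_Icc]
      split_ifs
      all_goals try (exfalso; omega)
      all_goals try simp
      rw [mul_comm (b ^ (i - 1)) _, mul_assoc, ← pow_add,
        show k - i - 1 - n + (i - 1) = k - 2 - n by omega]
    rw [Finset.sum_congr rfl hterm, Finset.sum_ite_mem, Finset.inter_eq_right.mpr
      (by intro i hi; simp only [mem_Icc] at hi; simp only [mem_range]; omega),
      ← Finset.sum_mul]
    have hsum : ∑ i ∈ Icc 1 (k - n - 1), ((k - i - 1).choose n : F) =
        ((k - 1).choose (n + 1) : ℕ) := by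
      by_cases hk : n + 2 ≤ k
      · rw [← Nat.cast_sum]
        congr 1
        rw [show Icc 1 (k - n - 1) = Finset.image (fun m => k - 1 - m) (Icc n (k - 2)) by
          ext i
          simp only [mem_Icc, Finset.mem_image]
          constructor
          · rintro ⟨h1, h2⟩; exact ⟨k - i - 1, by omega, by omega⟩
          · rintro ⟨m, hm, rfl⟩; omega]
        rw [Finset.sum_image (by intro x hx y hy hxy; simp only [Finset.mem_coe, mem_Icc] at hx hy hxy; omega)]
        rw [Finset.sum_congr rfl (fun m hm => by
          simp only [mem_Icc] at hm
          show (k - (k - 1 - m) - 1).choose n = m.choose n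
          congr 1
          omega)]
        rw [Nat.sum_Icc_choose, show k - 2 + 1 = k - 1 by omega]
      · rw [Finset.Icc_eq_empty (by omega), Finset.sum_empty]
        rw [Nat.choose_eq_zero_of_lt (by omega), Nat.cast_zero]
    rw [hsum]
    by_cases hk : n + 2 ≤ k
    · rw [if_pos hk]
      congr 2
      omega
    · rw [if_neg hk, Nat.choose_eq_zero_of_lt (by omega), Nat.cast_zero, zero_mul]

lemma ngComp_sig (a b : F) : ngComp (sig a) (sig b) = sig (a + b) := by
  ext k
  rw [ngComp, coeff_mk, coeff_sig]
  rcases Nat.eq_zero_or_pos k with rfl | hk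
  · simp [coeff_sig_pow]
  · rw [if_neg (by omega), Finset.sum_range_succ']
    simp only [coeff_sig, if_neg (Nat.succ_ne_zero _), if_pos rfl, zero_mul, add_zero,
      Nat.add_sub_cancel]
    rw [Finset.sum_congr rfl (fun j hj => by
      rw [coeff_sig_pow, if_pos (by simp only [Finset.mem_range] at hj; omega)])]
    obtain ⟨m, rfl⟩ : ∃ m, k = m + 1 := ⟨k - 1, by omega⟩
    simp only [Nat.add_sub_cancel]
    rw [add_pow]
    simp only [if_true, zero_mul, add_zero]
    apply Finset.sum_congr rfl
    intro j hj
    ring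

lemma sig_zero : sig (0 : F) = PowerSeries.X := by
  ext k
  rw [coeff_sig, PowerSeries.coeff_X]
  rcases k with _ | _ | k <;> simp

lemma isNott_sig (a : F) : IsNott (sig a) := ⟨by simp, by simp⟩

lemma hasDepth_sig {a : F} (ha : a ≠ 0) : HasDepth (sig a) 1 := by
  constructor
  · intro i hi
    rw [map_sub, coeff_sig, PowerSeries.coeff_X]
    interval_cases i <;> simp
  · rw [map_sub, coeff_sig, PowerSeries.coeff_X]
    simpa using ha

lemma sig_ne_sig {a b : F} (hab : a ≠ b) : sig a ≠ sig b := by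
  intro h
  have := congrArg (coeff 2) h
  simp at this
  exact hab this

lemma coeff_two_ngComp (σ τ : PowerSeries F) (hσ : IsNott σ) (hτ : IsNott τ) :
    coeff 2 (ngComp σ τ) = coeff 2 σ + coeff 2 τ := by
  obtain ⟨hσ0, hσ1⟩ := hσ
  obtain ⟨hτ0, hτ1⟩ := hτ
  rw [ngComp, coeff_mk, Finset.sum_range_succ, Finset.sum_range_succ, Finset.sum_range_one,
    pow_zero, pow_one, sq, coeff_mul, Finset.Nat.sum_antidiagonal_eq_sum_range_succ_mk,
    Finset.sum_range_succ, Finset.sum_range_succ, Finset.sum_range_one]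
  norm_num [hσ0, hσ1, hτ0, hτ1, PowerSeries.coeff_one]
  ring

end Aux

theorem statement8 (F : Type*) [Field F] [CharP F 2] :
    (∃ σ τ : PowerSeries F, IsNott σ ∧ IsNott τ ∧
      ngComp σ σ = PowerSeries.X ∧ ngComp τ τ = PowerSeries.X ∧
      ngComp σ τ = ngComp τ σ ∧
      σ ≠ PowerSeries.X ∧ τ ≠ PowerSeries.X ∧ σ ≠ τ ∧
      HasDepth σ 1 ∧ HasDepth τ 1 ∧ HasDepth (ngComp σ τ) 1) ↔
    ∃ x : F, x ≠ 0 ∧ x ≠ 1 := by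
  have h2 : (2 : F) = 0 := by
    have := CharP.cast_eq_zero F 2
    exact_mod_cast this
  constructor
  · rintro ⟨σ, τ, hσN, hτN, -, -, -, -, -, -, hdσ, hdτ, hdc⟩
    have ha : coeff 2 σ ≠ 0 := by
      have := hdσ.2
      rw [map_sub, PowerSeries.coeff_X, if_neg (by norm_num), sub_zero] at this
      exact this
    have hb : coeff 2 τ ≠ 0 := by
      have := hdτ.2
      rw [map_sub, PowerSeries.coeff_X, if_neg (by norm_num), sub_zero] at this
      exact this
    have hab : coeff 2 σ + coeff 2 τ ≠ 0 := by
      have := hdc.2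
      rw [map_sub, PowerSeries.coeff_X, if_neg (by norm_num), sub_zero,
        coeff_two_ngComp σ τ hσN hτN] at this
      exact this
    refine ⟨coeff 2 σ / coeff 2 τ, div_ne_zero ha hb, ?_⟩
    intro h
    rw [div_eq_one_iff_eq hb] at h
    apply hab
    rw [h, ← two_mul, h2, zero_mul]
  · rintro ⟨x, hx0, hx1⟩
    have h11 : (1 : F) + 1 = 0 := by rw [← two_mul, h2, zero_mul]
    have hxx : x + x = 0 := by rw [← two_mul, h2, zero_mul]
    have h1x : (1 : F) + x ≠ 0 := by
      intro h
      apply hx1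
      have : x = -1 := by linear_combination h
      rw [this, CharTwo.neg_eq]
    refine ⟨sig 1, sig x, isNott_sig 1, isNott_sig x, ?_, ?_, ?_, ?_, ?_, ?_, ?_, ?_, ?_⟩
    · rw [ngComp_sig, h11, sig_zero]
    · rw [ngComp_sig, hxx, sig_zero]
    · rw [ngComp_sig, ngComp_sig, add_comm]
    · rw [← sig_zero]; exact sig_ne_sig one_ne_zero
    · rw [← sig_zero]; exact sig_ne_sig hx0
    · exact sig_ne_sig (Ne.symm hx1)
    · exact hasDepth_sig one_ne_zero
    · exact hasDepth_sig hx0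
    · rw [ngComp_sig]; exact hasDepth_sig h1x
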